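/- arXiv:1403.3106 — 2 statements merged into one kernel-verified Lean document; each statement's English description precedes it below -/
import Mathlib

section
/- Let H = G_1 × G_2 × ⋯ be the product of a sequence of metrisable topological groups G_n, equipped with the product topology. A sequence (h_m) in H tends to infinity in H if and only if there is some k so that the sequence of projections proj_{G_1×⋯×G_k}(h_m) tends to infinity in the finite product G_1 × ⋯ × G_k. -/
open Filter Topology
open scoped Pointwise

/-- A (plain) metric given as a distance function. -/
def IsMetric {G : Type*} (d : G → G → ℝ) : Prop :=
  (∀ x y, d x y = 0 ↔ x = y) ∧ (∀ x y, d x y = d y x) ∧ ∀ x y z, d x z ≤ d x y + d y z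

/-- The metric `d` induces the topology of `G`. -/
def IsCompatible (G : Type*) [TopologicalSpace G] (d : G → G → ℝ) : Prop :=
  ∀ (x : G) (s : Set G), s ∈ nhds x ↔ ∃ ε > (0 : ℝ), {y : G | d x y < ε} ⊆ s

/-- A compatible left-invariant metric on a topological group. -/
def IsCompatibleLeftInvariantMetric (G : Type*) [Group G] [TopologicalSpace G]
    (d : G → G → ℝ) : Prop :=
  IsMetric d ∧ IsCompatible G d ∧ ∀ h g f : G, d (h * g) (h * f) = d g f

/-- A set has finite diameter with respect to `d`. -/
def FiniteDiam {G : Type*} (d : G → G → ℝ) (A : Set G) : Prop :=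
  ∃ C : ℝ, ∀ x ∈ A, ∀ y ∈ A, d x y ≤ C

/-- `A` has property (OB) relative to `G`: finite diameter for every compatible
left-invariant metric. -/
def HasRelPropOB (G : Type*) [Group G] [TopologicalSpace G] (A : Set G) : Prop :=
  ∀ d : G → G → ℝ, IsCompatibleLeftInvariantMetric G d → FiniteDiam d A

/-- A sequence tends to infinity in `G` if some compatible left-invariant metric
witnesses `d (g n) 1 → ∞`. -/
def TendsToInfinity (G : Type*) [Group G] [TopologicalSpace G] (g : ℕ → G) : Prop :=
  ∃ d : G → G → ℝ, IsCompatibleLeftInvariantMetric G d ∧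
    Filter.Tendsto (fun n => d (g n) 1) Filter.atTop Filter.atTop

/-- A compatible left-invariant metric is metrically proper if `d (g n) 1 → ∞`
whenever `g n → ∞`. -/
def MetricallyProperMetric (G : Type*) [Group G] [TopologicalSpace G]
    (d : G → G → ℝ) : Prop :=
  ∀ g : ℕ → G, TendsToInfinity G g →
    Filter.Tendsto (fun n => d (g n) 1) Filter.atTop Filter.atTop

section BKAux

open NNReal

set_option linter.unusedSectionVars false
attribute [local instance] Classical.propDecidable
open scoped Pointwise

variable {G : Type*} [Group G] [TopologicalSpace G] [IsTopologicalGroup G]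

theorem bk_step {t : Set G} (ht : t ∈ 𝓝 1) :
    ∃ s : Set G, IsOpen s ∧ (1 : G) ∈ s ∧ (∀ x ∈ s, x⁻¹ ∈ s) ∧ s * s * s ⊆ t := by
  obtain ⟨V, hVo, hV1, hVV⟩ := exists_open_nhds_one_mul_subset ht
  obtain ⟨W, hWo, hW1, hWW⟩ := exists_open_nhds_one_mul_subset (hVo.mem_nhds hV1)
  have hWsubV : W ⊆ V := fun x hx => hWW (by simpa using Set.mul_mem_mul hW1 hx)
  refine ⟨W ∩ W⁻¹, hWo.inter hWo.inv, ⟨hW1, by simpa using hW1⟩, ?_, ?_⟩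
  · rintro x ⟨hx1, hx2⟩
    exact ⟨by simpa using hx2, by simpa using hx1⟩
  · have h1 : W ∩ W⁻¹ ⊆ W := Set.inter_subset_left
    calc (W ∩ W⁻¹) * (W ∩ W⁻¹) * (W ∩ W⁻¹) ⊆ W * W * W :=
          Set.mul_subset_mul (Set.mul_subset_mul h1 h1) h1
      _ ⊆ V * V := Set.mul_subset_mul hWW hWsubV
      _ ⊆ t := hVV

theorem bk_exists_chain (U : ℕ → Set G) (hU : ∀ n, U n ∈ 𝓝 1) :
    ∃ V : ℕ → Set G, (∀ n, IsOpen (V n)) ∧ (∀ n, (1 : G) ∈ V n) ∧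
      (∀ n, ∀ x ∈ V n, x⁻¹ ∈ V n) ∧ (∀ n, V n ⊆ U n) ∧
      ∀ n, V (n + 1) * V (n + 1) * V (n + 1) ⊆ V n := by
  set P : Set G → Prop := fun s => IsOpen s ∧ (1 : G) ∈ s ∧ ∀ x ∈ s, x⁻¹ ∈ s with hP
  have step : ∀ t : Set G, t ∈ 𝓝 1 → ∃ s : Set G, P s ∧ s * s * s ⊆ t := by
    intro t ht
    obtain ⟨s, h1, h2, h3, h4⟩ := bk_step ht
    exact ⟨s, ⟨h1, h2, h3⟩, h4⟩
  have mem_of_P : ∀ s : Set G, P s → s ∈ 𝓝 1 := fun s hs => hs.1.mem_nhds hs.2.1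
  have sub_cube : ∀ s : Set G, P s → s ⊆ s * s * s := by
    intro s hs x hx
    have : (1 : G) * 1 * x ∈ s * s * s :=
      Set.mul_mem_mul (Set.mul_mem_mul hs.2.1 hs.2.1) hx
    simpa using this
  -- recursive construction
  have : ∀ n : ℕ, ∃ p : {s : Set G // P s}, True := fun _ => ⟨⟨_, (step _ (hU 0)).choose_spec.1⟩, trivial⟩
  -- define by Nat.rec
  let F : {s : Set G // P s} → ℕ → {s : Set G // P s} := fun p n =>
    ⟨(step (U n ∩ p.1) (Filter.inter_mem (hU n) (mem_of_P _ p.2))).choose,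
      (step (U n ∩ p.1) (Filter.inter_mem (hU n) (mem_of_P _ p.2))).choose_spec.1⟩
  let V0 : {s : Set G // P s} := ⟨(step (U 0) (hU 0)).choose, (step (U 0) (hU 0)).choose_spec.1⟩
  let W : ℕ → {s : Set G // P s} := fun n => Nat.rec V0 (fun n p => F p (n + 1)) n
  have hW0 : (W 0).1 * (W 0).1 * (W 0).1 ⊆ U 0 := by
    exact (step (U 0) (hU 0)).choose_spec.2
  have hWsucc : ∀ n, (W (n + 1)).1 * (W (n + 1)).1 * (W (n + 1)).1 ⊆ U (n + 1) ∩ (W n).1 := by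
    intro n
    exact (step (U (n + 1) ∩ (W n).1)
      (Filter.inter_mem (hU (n + 1)) (mem_of_P _ (W n).2))).choose_spec.2
  refine ⟨fun n => (W n).1, fun n => (W n).2.1, fun n => (W n).2.2.1, fun n => (W n).2.2.2, ?_, ?_⟩
  · intro n
    cases n with
    | zero => exact (sub_cube _ (W 0).2).trans hW0
    | succ m => exact ((sub_cube _ (W (m+1)).2).trans (hWsucc m)).trans Set.inter_subset_left
  · exact fun n => (hWsucc n).trans Set.inter_subset_right

noncomputable def bkRho (V : ℕ → Set G) (g : G) : ℝ≥0 :=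
  if h : ∃ n, g ∉ V n then (2 : ℝ≥0)⁻¹ ^ Nat.find h else 0

variable {V : ℕ → Set G}

theorem bk_half_lt_one : (2⁻¹ : ℝ≥0) < 1 := by
  rw [← NNReal.coe_lt_coe]; push_cast; norm_num

theorem bk_half_pos : (0 : ℝ≥0) < 2⁻¹ := by
  rw [← NNReal.coe_lt_coe]; push_cast; norm_num

theorem bk_half_le_one : (2⁻¹ : ℝ≥0) ≤ 1 := bk_half_lt_one.le

theorem bk_half_ne_zero : (2⁻¹ : ℝ≥0) ≠ 0 := bk_half_pos.ne'

theorem bkRho_le_one (g : G) : bkRho V g ≤ 1 := by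
  rw [bkRho]; split
  · exact pow_le_one' bk_half_le_one _
  · exact zero_le_one

theorem bkRho_one (h1 : ∀ n, (1 : G) ∈ V n) : bkRho V (1 : G) = 0 :=
  dif_neg (by push_neg; exact h1)

theorem bkRho_eq_zero (hsep : ∀ g : G, (∀ n, g ∈ V n) → g = 1) {g : G}
    (h : bkRho V g = 0) : g = 1 := by
  rw [bkRho] at h
  split at h
  · exact absurd h (pow_ne_zero _ bk_half_ne_zero)
  · next hne => push_neg at hne; exact hsep g hne

theorem bkRho_inv (hsym : ∀ n, ∀ x ∈ V n, x⁻¹ ∈ V n) (g : G) :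
    bkRho V g⁻¹ = bkRho V g := by
  have key : ∀ n, g⁻¹ ∉ V n ↔ g ∉ V n := fun n =>
    ⟨fun h hg => h (hsym n g hg), fun h hg => h (by simpa using hsym n g⁻¹ hg)⟩
  by_cases h : ∃ n, g ∉ V n
  · have h' : ∃ n, g⁻¹ ∉ V n := ⟨h.choose, (key _).2 h.choose_spec⟩
    rw [bkRho, bkRho, dif_pos h, dif_pos h']
    congr 1
    exact le_antisymm (Nat.find_min' h' ((key _).2 (Nat.find_spec h)))
      (Nat.find_min' h ((key _).1 (Nat.find_spec h')))
  · rw [bkRho, bkRho, dif_neg h, dif_neg (fun h' : ∃ n, g⁻¹ ∉ V n =>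
      h ⟨h'.choose, (key _).1 h'.choose_spec⟩)]

theorem bkRho_le_iff {g : G} {n : ℕ} :
    bkRho V g ≤ 2⁻¹ ^ n ↔ ∀ k < n, g ∈ V k := by
  rw [bkRho]
  split
  · next h =>
    constructor
    · intro hle k hk
      by_contra hg
      have hfind : Nat.find h ≤ k := Nat.find_min' h hg
      have h2 : (2⁻¹ : ℝ≥0) ^ n < 2⁻¹ ^ Nat.find h :=
        pow_lt_pow_right_of_lt_one₀ bk_half_pos bk_half_lt_one
          (lt_of_le_of_lt hfind hk)
      exact absurd hle (not_le.2 h2)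
    · intro hmem
      apply pow_le_pow_right_of_le_one' bk_half_le_one
      rw [Nat.le_find_iff]
      exact fun m hm hnot => hnot (hmem m hm)
  · next h =>
    simp only [zero_le, true_iff]
    push_neg at h
    exact fun k _ => h k

theorem bkRho_mem_of_lt {g : G} {n : ℕ} (h : bkRho V g < 2⁻¹ ^ (n + 1)) :
    g ∈ V n := by
  by_contra hg
  have hex : ∃ m, g ∉ V m := ⟨n, hg⟩
  rw [bkRho, dif_pos hex] at h
  have h1 : Nat.find hex ≤ n + 1 := (Nat.find_min' hex hg).trans (Nat.le_succ n)
  have h2 : (2⁻¹ : ℝ≥0) ^ (n + 1) ≤ 2⁻¹ ^ Nat.find hex :=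
    pow_le_pow_right_of_le_one' bk_half_le_one h1
  exact absurd h (not_lt.2 h2)

theorem bkRho_ne_zero_pow {g : G} (h : bkRho V g ≠ 0) :
    ∃ m, bkRho V g = 2⁻¹ ^ m := by
  by_cases hx : ∃ n, g ∉ V n
  · rw [bkRho, dif_pos hx]
    exact ⟨_, rfl⟩
  · rw [bkRho, dif_neg hx] at h
    exact absurd rfl h

theorem bk_quad (h1 : ∀ n, (1 : G) ∈ V n) (hsep : ∀ g : G, (∀ n, g ∈ V n) → g = 1)
    (hsub : ∀ n, V (n + 1) * V (n + 1) * V (n + 1) ⊆ V n) (a b c : G) :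
    bkRho V (a * b * c) ≤ 2 * max (bkRho V a) (max (bkRho V b) (bkRho V c)) := by
  set M := max (bkRho V a) (max (bkRho V b) (bkRho V c)) with hM
  have ha : bkRho V a ≤ M := le_max_left _ _
  have hb : bkRho V b ≤ M := le_trans (le_max_left _ _) (le_max_right _ _)
  have hc : bkRho V c ≤ M := le_trans (le_max_right _ _) (le_max_right _ _)
  rcases eq_or_ne M 0 with h0 | h0
  · have ha1 : a = 1 := bkRho_eq_zero hsep (le_antisymm (h0 ▸ ha) zero_le)
    have hb1 : b = 1 := bkRho_eq_zero hsep (le_antisymm (h0 ▸ hb) zero_le)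
    have hc1 : c = 1 := bkRho_eq_zero hsep (le_antisymm (h0 ▸ hc) zero_le)
    simp [ha1, hb1, hc1, bkRho_one h1]
  · have hMval : ∃ m, M = 2⁻¹ ^ m := by
      have : M = bkRho V a ∨ M = bkRho V b ∨ M = bkRho V c := by
        rcases max_choice (bkRho V a) (max (bkRho V b) (bkRho V c)) with h | h
        · exact Or.inl (hM.trans h)
        · rcases max_choice (bkRho V b) (bkRho V c) with h' | h'
          · exact Or.inr (Or.inl ((hM.trans h).trans h'))
          · exact Or.inr (Or.inr ((hM.trans h).trans h'))
      rcases this with h | h | h <;>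
        · rw [h] at h0 ⊢; exact bkRho_ne_zero_pow h0
    obtain ⟨m, hm⟩ := hMval
    cases m with
    | zero =>
      calc bkRho V (a * b * c) ≤ 1 := bkRho_le_one _
        _ ≤ 2 * M := by rw [hm]; norm_num
    | succ m =>
      have key : bkRho V (a * b * c) ≤ 2⁻¹ ^ m := by
        rw [bkRho_le_iff]
        intro k hk
        have hk' : k + 1 < m + 1 := Nat.succ_lt_succ hk
        have haa : a ∈ V (k + 1) := (bkRho_le_iff.1 (ha.trans_eq hm)) _ hk'
        have hbb : b ∈ V (k + 1) := (bkRho_le_iff.1 (hb.trans_eq hm)) _ hk'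
        have hcc : c ∈ V (k + 1) := (bkRho_le_iff.1 (hc.trans_eq hm)) _ hk'
        exact hsub k (Set.mul_mem_mul (Set.mul_mem_mul haa hbb) hcc)
      calc bkRho V (a * b * c) ≤ 2⁻¹ ^ m := key
        _ = 2 * 2⁻¹ ^ (m + 1) := by
            rw [pow_succ, mul_comm ((2 : ℝ≥0)⁻¹ ^ m), ← mul_assoc]
            norm_num
        _ = 2 * M := by rw [hm]

theorem bk_exists_metric (G : Type*) [Group G] [TopologicalSpace G] [IsTopologicalGroup G]
    [FirstCountableTopology G] [T1Space G] :
    ∃ d : G → G → ℝ, IsCompatibleLeftInvariantMetric G d ∧ ∀ x y, d x y ≤ 1 := by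
  obtain ⟨U, hU⟩ := (𝓝 (1 : G)).exists_antitone_basis
  obtain ⟨V, hVo, hV1, hVsym, hVU, hVmul⟩ :=
    bk_exists_chain U fun n => hU.1.mem_of_mem trivial
  have hsep : ∀ g : G, (∀ n, g ∈ V n) → g = 1 := by
    intro g hg
    by_contra hne
    obtain ⟨n, -, hn⟩ := hU.1.mem_iff.1 (compl_singleton_mem_nhds (Ne.symm hne))
    exact hn (hVU n (hg n)) rfl
  have hVanti : ∀ n, V (n + 1) ⊆ V n := fun n x hx => by
    simpa using hVmul n (Set.mul_mem_mul (Set.mul_mem_mul hx (hV1 (n + 1))) (hV1 (n + 1)))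
  have hVanti' : Antitone V := antitone_nat_of_succ_le hVanti
  set d₀ : G → G → ℝ≥0 := fun x y => bkRho V (x⁻¹ * y) with hd₀
  have hself : ∀ x, d₀ x x = 0 := fun x => by
    simp only [hd₀, inv_mul_cancel]
    exact bkRho_one hV1
  have hcomm : ∀ x y, d₀ x y = d₀ y x := by
    intro x y
    have hxy : (x⁻¹ * y)⁻¹ = y⁻¹ * x := by group
    simp only [hd₀]
    rw [← hxy, bkRho_inv hVsym]
  have hd₀inv : ∀ h a b : G, d₀ (h * a) (h * b) = d₀ a b := by
    intro h a b
    have : (h * a)⁻¹ * (h * b) = a⁻¹ * b := by group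
    simp only [hd₀, this]
  have hquad : ∀ x₁ x₂ x₃ x₄ : G,
      d₀ x₁ x₄ ≤ 2 * max (d₀ x₁ x₂) (max (d₀ x₂ x₃) (d₀ x₃ x₄)) := by
    intro x₁ x₂ x₃ x₄
    have hx : x₁⁻¹ * x₄ = x₁⁻¹ * x₂ * (x₂⁻¹ * x₃) * (x₃⁻¹ * x₄) := by group
    simp only [hd₀, hx]
    exact bk_quad hV1 hsep hVmul _ _ _
  set D : G → G → ℝ :=
    fun x y => @dist G (PseudoMetricSpace.ofPreNNDist d₀ hself hcomm).toDist x y with hD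
  have hDle : ∀ x y, D x y ≤ (d₀ x y : ℝ) := fun x y =>
    PseudoMetricSpace.dist_ofPreNNDist_le d₀ hself hcomm x y
  have h2D : ∀ x y, (d₀ x y : ℝ) ≤ 2 * D x y := fun x y =>
    PseudoMetricSpace.le_two_mul_dist_ofPreNNDist d₀ hself hcomm hquad x y
  have hDself : ∀ x, D x x = 0 := fun x =>
    @dist_self G (PseudoMetricSpace.ofPreNNDist d₀ hself hcomm) x
  have hDcomm : ∀ x y, D x y = D y x := fun x y =>
    @dist_comm G (PseudoMetricSpace.ofPreNNDist d₀ hself hcomm) x y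
  have hDtri : ∀ x y z, D x z ≤ D x y + D y z := fun x y z =>
    @dist_triangle G (PseudoMetricSpace.ofPreNNDist d₀ hself hcomm) x y z
  have hDzero : ∀ x y, D x y = 0 ↔ x = y := by
    intro x y
    constructor
    · intro h0
      have h1 : (d₀ x y : ℝ) ≤ 0 := by
        have := h2D x y
        rw [h0] at this
        simpa using this
      have h2 : d₀ x y = 0 := le_antisymm (by exact_mod_cast h1) zero_le
      have h3 : x⁻¹ * y = 1 := bkRho_eq_zero hsep h2
      exact inv_mul_eq_one.1 h3
    · rintro rfl
      exact hDself x
  have hDinv : ∀ h x y : G, D (h * x) (h * y) = D x y := by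
    intro h x y
    simp only [hD]
    rw [PseudoMetricSpace.dist_ofPreNNDist, PseudoMetricSpace.dist_ofPreNNDist]
    refine congrArg _ ?_
    have hsurj : Function.Surjective (List.map (fun z : G => h * z)) :=
      List.map_surjective_iff.2 fun z => ⟨h⁻¹ * z, by group⟩
    refine (Function.Surjective.iInf_congr _ hsurj fun l => ?_).symm
    have h1 : (h * x) :: List.map (fun z : G => h * z) l
        = List.map (fun z : G => h * z) (x :: l) := rfl
    have h2 : List.map (fun z : G => h * z) l ++ [h * y]
        = List.map (fun z : G => h * z) (l ++ [y]) := by simp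
    rw [h1, h2, List.zipWith_map]
    have h3 : (fun a b : G => d₀ (h * a) (h * b)) = d₀ := by
      funext a b
      exact hd₀inv h a b
    rw [h3]
  have hcompat : IsCompatible G D := by
    intro x s
    constructor
    · intro hs
      have hc : ContinuousAt (fun y : G => x * y) 1 :=
        (continuous_const.mul continuous_id).continuousAt
      have h1' : (fun y : G => x * y) ⁻¹' s ∈ 𝓝 (1 : G) := hc (by simpa using hs)
      obtain ⟨n, -, hn⟩ := hU.1.mem_iff.1 h1'
      refine ⟨(((2 : ℝ≥0)⁻¹ ^ (n + 2) : ℝ≥0) : ℝ),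
        by exact_mod_cast pow_pos bk_half_pos (n + 2), fun y hy => ?_⟩
      have hq : (d₀ x y : ℝ) < 2 * (((2 : ℝ≥0)⁻¹ ^ (n + 2) : ℝ≥0) : ℝ) := by
        have := h2D x y
        have hy' : D x y < (((2 : ℝ≥0)⁻¹ ^ (n + 2) : ℝ≥0) : ℝ) := hy
        linarith
      have hq2 : (2 : ℝ) * (((2 : ℝ≥0)⁻¹ ^ (n + 2) : ℝ≥0) : ℝ)
          = (((2 : ℝ≥0)⁻¹ ^ (n + 1) : ℝ≥0) : ℝ) := by
        push_cast
        ring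
      have hlt : d₀ x y < (2 : ℝ≥0)⁻¹ ^ (n + 1) := by
        rw [hq2] at hq
        exact_mod_cast hq
      have hmem : x⁻¹ * y ∈ V n := bkRho_mem_of_lt hlt
      have := hn (hVU n hmem)
      simpa using this
    · rintro ⟨ε, hε, hsub⟩
      obtain ⟨n, hn⟩ : ∃ n : ℕ, (((2 : ℝ≥0)⁻¹ ^ (n + 1) : ℝ≥0) : ℝ) < ε := by
        obtain ⟨n, hn⟩ := exists_pow_lt_of_lt_one hε (by norm_num : (2⁻¹ : ℝ) < 1)
        refine ⟨n, ?_⟩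
        have he : (((2 : ℝ≥0)⁻¹ ^ (n + 1) : ℝ≥0) : ℝ) = (2⁻¹ : ℝ) ^ (n + 1) := by
          push_cast
          ring
        rw [he]
        refine lt_of_le_of_lt ?_ hn
        exact pow_le_pow_of_le_one (by norm_num) (by norm_num) (Nat.le_succ n)
      have hball : {y : G | x⁻¹ * y ∈ V n} ∈ 𝓝 x := by
        have hcont : Continuous fun y : G => x⁻¹ * y := continuous_const.mul continuous_id
        exact ((hVo n).preimage hcont).mem_nhds (by simp [hV1 n])
      refine Filter.mem_of_superset hball fun y hy => hsub ?_
      show D x y < ε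
      have h1 : d₀ x y ≤ (2 : ℝ≥0)⁻¹ ^ (n + 1) :=
        bkRho_le_iff.2 fun k hk => hVanti' (Nat.lt_succ_iff.1 hk) hy
      calc D x y ≤ (d₀ x y : ℝ) := hDle x y
        _ ≤ (((2 : ℝ≥0)⁻¹ ^ (n + 1) : ℝ≥0) : ℝ) := by exact_mod_cast h1
        _ < ε := hn
  refine ⟨D, ⟨⟨hDzero, hDcomm, hDtri⟩, hcompat, fun h g f => hDinv h g f⟩, fun x y => ?_⟩
  calc D x y ≤ (d₀ x y : ℝ) := hDle x y
    _ ≤ 1 := by exact_mod_cast bkRho_le_one _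

end BKAux

theorem tendsToInfinity_in_product_iff_finite_projection
    {G : ℕ → Type*} [∀ n, Group (G n)] [∀ n, TopologicalSpace (G n)]
    [∀ n, IsTopologicalGroup (G n)] [∀ n, TopologicalSpace.MetrizableSpace (G n)]
    (h : ℕ → ∀ n, G n) :
    TendsToInfinity (∀ n, G n) h ↔
      ∃ k : ℕ, 0 < k ∧
        TendsToInfinity (∀ i : Fin k, G i.val) (fun m (i : Fin k) => h m i.val) := by
  constructor
  · rintro ⟨D, ⟨⟨hDzero, hDcomm, hDtri⟩, hDcompat, hDinv⟩, hDtend⟩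
    have hball : {y : ∀ n, G n | D 1 y < 1} ∈ 𝓝 (1 : ∀ n, G n) :=
      (hDcompat 1 _).2 ⟨1, one_pos, fun y hy => hy⟩
    rw [nhds_pi, Filter.mem_pi] at hball
    obtain ⟨I, hIfin, t, ht, hIt⟩ := hball
    obtain ⟨k, hk0, hIk⟩ : ∃ k : ℕ, 0 < k ∧ ∀ i ∈ I, i < k := by
      rcases hIfin.bddAbove with ⟨m, hm⟩
      exact ⟨m + 1, Nat.succ_pos m, fun i hi => Nat.lt_succ_of_le (hm hi)⟩
    have hN : ∀ x : ∀ n, G n, (∀ i, i < k → x i = 1) → D 1 x < 1 := by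
      intro x hx
      apply hIt
      intro i hi
      rw [hx i (hIk i hi)]
      exact mem_of_mem_nhds (ht i)
    set σ : (∀ i : Fin k, G i.val) → (∀ n, G n) := fun p n =>
      if hn : n < k then p ⟨n, hn⟩ else 1 with hσ
    have hσ_hom : ∀ p q, σ (p * q) = σ p * σ q := by
      intro p q
      funext n
      simp only [hσ, Pi.mul_apply]
      split <;> simp
    have hσ_one : σ 1 = 1 := by
      funext n
      simp only [hσ, Pi.one_apply]
      split <;> simp
    have hσ_inj : Function.Injective σ := by
      intro p q hpq
      funext i
      have := congrFun hpq i.val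
      simpa [hσ, i.isLt] using this
    have hσ_cont : Continuous σ := by
      apply continuous_pi
      intro n
      by_cases hn : n < k
      · simp only [hσ, dif_pos hn]
        exact continuous_apply _
      · simp only [hσ, dif_neg hn]
        exact continuous_const
    set d : (∀ i : Fin k, G i.val) → (∀ i : Fin k, G i.val) → ℝ :=
      fun p q => D (σ p) (σ q) with hd
    have hπσ : ∀ q, (fun i : Fin k => σ q i.val) = q := by
      intro q
      funext i
      simp [hσ, i.isLt]
    refine ⟨k, hk0, d, ⟨⟨?_, ?_, ?_⟩, ?_, ?_⟩, ?_⟩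
    · intro p q
      constructor
      · intro h0
        exact hσ_inj ((hDzero _ _).1 h0)
      · rintro rfl
        exact (hDzero _ _).2 rfl
    · intro p q
      exact hDcomm _ _
    · intro p q r
      exact hDtri _ _ _
    · intro p s
      constructor
      · intro hs
        have hπcont : Continuous (fun x : ∀ n, G n => fun i : Fin k => x i.val) :=
          continuous_pi fun i => continuous_apply _
        have hpre : (fun x : ∀ n, G n => fun i : Fin k => x i.val) ⁻¹' s ∈ 𝓝 (σ p) := by
          apply hπcont.continuousAt.preimage_mem_nhds
          rw [hπσ p]
          exact hs
        obtain ⟨ε, hε, hsub⟩ := (hDcompat (σ p) _).1 hpre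
        refine ⟨ε, hε, fun q hq => ?_⟩
        have h2 := hsub hq
        have h3 : (fun i : Fin k => σ q i.val) ∈ s := h2
        rwa [hπσ q] at h3
      · rintro ⟨ε, hε, hsub⟩
        refine Filter.mem_of_superset ?_ hsub
        have hball2 : {y : ∀ n, G n | D (σ p) y < ε} ∈ 𝓝 (σ p) :=
          (hDcompat (σ p) _).2 ⟨ε, hε, fun y hy => hy⟩
        exact hσ_cont.continuousAt.preimage_mem_nhds hball2
    · intro a g f
      simp only [hd]
      rw [hσ_hom, hσ_hom, hDinv]
    · have key : ∀ m, D (h m) 1 + (-1) ≤ d (fun i : Fin k => h m i.val) 1 := by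
        intro m
        set p : ∀ i : Fin k, G i.val := fun i => h m i.val with hp
        have h1 : D (h m) 1 ≤ D (h m) (σ p) + D (σ p) 1 := hDtri _ _ _
        have h2 : D (h m) (σ p) < 1 := by
          have h3 : D (h m) (σ p) = D 1 ((h m)⁻¹ * σ p) := by
            have h4 := hDinv (h m)⁻¹ (h m) (σ p)
            rw [inv_mul_cancel] at h4
            exact h4.symm
          rw [h3]
          apply hN
          intro i hi
          have h5 : σ p i = h m i := by simp [hσ, hi, hp]
          simp [Pi.mul_apply, Pi.inv_apply, h5]
        have h6 : d p 1 = D (σ p) 1 := by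
          simp only [hd]
          rw [hσ_one]
        rw [← hp] at *
        rw [h6]
        linarith
      refine tendsto_atTop_mono key ?_
      exact tendsto_atTop_add_const_right Filter.atTop (-1) hDtend
  · rintro ⟨k, hk0, d, ⟨⟨hdzero, hdcomm, hdtri⟩, hdcompat, hdinv⟩, hdtend⟩
    obtain ⟨e, ⟨⟨hezero, hecomm, hetri⟩, hecompat, heinv⟩, hebd⟩ :=
      bk_exists_metric (∀ n, G n)
    have hdnonneg : ∀ p q, 0 ≤ d p q := by
      intro p q
      have h1 := hdtri p q p
      have h2 := (hdzero p p).2 rfl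
      have h3 := hdcomm q p
      linarith
    have henonneg : ∀ x y, 0 ≤ e x y := by
      intro x y
      have h1 := hetri x y x
      have h2 := (hezero x x).2 rfl
      have h3 := hecomm y x
      linarith
    set π : (∀ n, G n) → (∀ i : Fin k, G i.val) := fun x i => x i.val with hπ
    have hπcont : Continuous π := continuous_pi fun i => continuous_apply _
    set D : (∀ n, G n) → (∀ n, G n) → ℝ := fun x y => d (π x) (π y) + e x y with hD
    refine ⟨D, ⟨⟨?_, ?_, ?_⟩, ?_, ?_⟩, ?_⟩
    · intro x y
      constructor
      · intro h0
        simp only [hD] at h0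
        have h1 := hdnonneg (π x) (π y)
        have h2 := henonneg x y
        have h3 : e x y = 0 := by linarith
        exact (hezero x y).1 h3
      · rintro rfl
        simp only [hD]
        rw [(hdzero _ _).2 rfl, (hezero _ _).2 rfl]
        norm_num
    · intro x y
      simp only [hD]
      rw [hdcomm, hecomm]
    · intro x y z
      simp only [hD]
      have h1 := hdtri (π x) (π y) (π z)
      have h2 := hetri x y z
      linarith
    · intro x s
      constructor
      · intro hs
        obtain ⟨ε, hε, hsub⟩ := (hecompat x s).1 hs
        refine ⟨ε, hε, fun y hy => hsub ?_⟩
        show e x y < ε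
        have h1 := hdnonneg (π x) (π y)
        simp only [hD, Set.mem_setOf_eq] at hy
        linarith
      · rintro ⟨ε, hε, hsub⟩
        have h1 : {y : ∀ n, G n | e x y < ε / 2} ∈ 𝓝 x :=
          (hecompat x _).2 ⟨ε / 2, by linarith, fun y hy => hy⟩
        have h2 : {q | d (π x) q < ε / 2} ∈ 𝓝 (π x) :=
          (hdcompat (π x) _).2 ⟨ε / 2, by linarith, fun q hq => hq⟩
        have h3 : π ⁻¹' {q | d (π x) q < ε / 2} ∈ 𝓝 x :=
          hπcont.continuousAt.preimage_mem_nhds h2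
        refine Filter.mem_of_superset (Filter.inter_mem h3 h1) fun y hy => hsub ?_
        obtain ⟨hy1, hy2⟩ := hy
        show D x y < ε
        simp only [hD]
        simp only [Set.mem_preimage, Set.mem_setOf_eq] at hy1 hy2
        linarith
    · intro a x y
      simp only [hD]
      have h1 : π (a * x) = π a * π x := rfl
      have h2 : π (a * y) = π a * π y := rfl
      rw [h1, h2, hdinv, heinv]
    · have key : ∀ m, d (fun i : Fin k => h m i.val) 1 ≤ D (h m) 1 := by
        intro m
        have h3 := henonneg (h m) 1
        have h4 : D (h m) 1 = d (fun i : Fin k => h m i.val) 1 + e (h m) 1 := rfl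
        linarith
      exact tendsto_atTop_mono key hdtend
end

section
/- Let G_1, G_2, … be an infinite sequence of metrisable topological groups, each failing property (OB) (i.e., each G_n contains a sequence tending to infinity in G_n), and set H = G_1 × G_2 × ⋯ with the product topology. Then there is a sequence (h_m) of elements of H which eventually leaves every subset of H having property (OB) relative to H, but which does not tend to infinity in H. -/
open Filter Topology
open scoped Pointwise

lemma IsMetric.nonneg' {X : Type*} {d : X → X → ℝ} (hd : IsMetric d) (x y : X) : 0 ≤ d x y := by
  have h0 : d x x = 0 := (hd.1 x x).2 rfl
  have ht := hd.2.2 x y x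
  have hs := hd.2.1 x y
  linarith

lemma IsMetric.pos_of_ne {X : Type*} {d : X → X → ℝ} (hd : IsMetric d) {x y : X} (h : x ≠ y) :
    0 < d x y := by
  rcases lt_or_eq_of_le (hd.nonneg' x y) with h1 | h1
  · exact h1
  · exact absurd ((hd.1 x y).1 h1.symm) h

lemma ball_mem_nhds' {X : Type*} [TopologicalSpace X] {d : X → X → ℝ} (hc : IsCompatible X d)
    (x : X) {ε : ℝ} (hε : 0 < ε) : {y | d x y < ε} ∈ nhds x :=
  (hc x _).2 ⟨ε, hε, subset_rfl⟩

noncomputable def rho {G : ℕ → Type*} (dd : ∀ n, G n → G n → ℝ) (x y : ∀ n, G n) : ℝ :=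
  ∑' n, (1/2:ℝ)^n * min 1 (dd n (x n) (y n))

section rho
variable {G : ℕ → Type*} {dd : ∀ n, G n → G n → ℝ}

lemma rho_term_nonneg (hd : ∀ n, IsMetric (dd n)) (x y : ∀ n, G n) (n : ℕ) :
    0 ≤ (1/2:ℝ)^n * min 1 (dd n (x n) (y n)) := by
  apply mul_nonneg (by positivity)
  exact le_min zero_le_one ((hd n).nonneg' _ _)

lemma rho_summable (hd : ∀ n, IsMetric (dd n)) (x y : ∀ n, G n) :
    Summable (fun n => (1/2:ℝ)^n * min 1 (dd n (x n) (y n))) := by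
  refine Summable.of_nonneg_of_le (rho_term_nonneg hd x y)
    (fun n => ?_) (summable_geometric_of_lt_one (r := 1/2) (by norm_num) (by norm_num))
  calc (1/2:ℝ)^n * min 1 (dd n (x n) (y n)) ≤ (1/2:ℝ)^n * 1 := by
        apply mul_le_mul_of_nonneg_left (min_le_left _ _) (by positivity)
    _ = (1/2:ℝ)^n := mul_one _

lemma rho_nonneg (hd : ∀ n, IsMetric (dd n)) (x y : ∀ n, G n) : 0 ≤ rho dd x y :=
  tsum_nonneg (rho_term_nonneg hd x y)

lemma min1_subadd {a b c : ℝ} (hab : c ≤ a + b) (ha : 0 ≤ a) (hb : 0 ≤ b) :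
    min 1 c ≤ min 1 a + min 1 b := by
  rcases le_or_gt 1 a with h | h
  · have : min 1 a = 1 := min_eq_left h
    have h2 : min 1 b ≥ 0 := le_min zero_le_one hb
    have := min_le_left 1 c
    linarith
  rcases le_or_gt 1 b with h' | h'
  · have : min 1 b = 1 := min_eq_left h'
    have h2 : (0:ℝ) ≤ min 1 a := le_min zero_le_one ha
    have := min_le_left 1 c
    linarith
  · rw [min_eq_right h.le, min_eq_right h'.le]
    exact le_trans (min_le_right _ _) hab

lemma rho_metric (hd : ∀ n, IsMetric (dd n)) : IsMetric (rho (G := G) dd) := by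
  refine ⟨fun x y => ?_, fun x y => ?_, fun x y z => ?_⟩
  · constructor
    · intro h
      funext n
      by_contra hne
      have hpos : 0 < (1/2:ℝ)^n * min 1 (dd n (x n) (y n)) := by
        have := (hd n).pos_of_ne hne
        have : (0:ℝ) < min 1 (dd n (x n) (y n)) := lt_min one_pos this
        positivity
      have hle := Summable.le_tsum (rho_summable hd x y) n (fun j _ => rho_term_nonneg hd x y j)
      rw [rho] at h
      linarith [h ▸ hle]
    · intro h
      subst h
      have : ∀ n, (1/2:ℝ)^n * min 1 (dd n (x n) (x n)) = 0 := by
        intro n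
        have : dd n (x n) (x n) = 0 := ((hd n).1 _ _).2 rfl
        simp [this]
      simp only [rho]
      rw [tsum_congr this, tsum_zero]
  · unfold rho
    exact tsum_congr fun n => by rw [(hd n).2.1 (x n) (y n)]
  · unfold rho
    have hxz := rho_summable hd x z
    have hxy := rho_summable hd x y
    have hyz := rho_summable hd y z
    calc ∑' n, (1/2:ℝ)^n * min 1 (dd n (x n) (z n))
        ≤ ∑' n, ((1/2:ℝ)^n * min 1 (dd n (x n) (y n)) + (1/2:ℝ)^n * min 1 (dd n (y n) (z n))) := by
          apply Summable.tsum_le_tsum _ hxz (hxy.add hyz)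
          intro n
          rw [← mul_add]
          apply mul_le_mul_of_nonneg_left _ (by positivity)
          exact min1_subadd ((hd n).2.2 _ _ _) ((hd n).nonneg' _ _) ((hd n).nonneg' _ _)
      _ = _ := Summable.tsum_add hxy hyz

end rho

section rhoCompat
variable {G : ℕ → Type*} [∀ n, TopologicalSpace (G n)] {dd : ∀ n, G n → G n → ℝ}

lemma rho_compat (hd : ∀ n, IsMetric (dd n)) (hc : ∀ n, IsCompatible (G n) (dd n)) :
    IsCompatible (∀ n, G n) (rho (G := G) dd) := by
  intro x s
  constructor
  · -- s ∈ nhds x → ∃ ε ball ⊆ s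
    intro hs
    rw [nhds_pi, Filter.mem_pi] at hs
    obtain ⟨I, hIfin, t, ht, hsub⟩ := hs
    have hball : ∀ n, ∃ ε > (0:ℝ), {y | dd n (x n) y < ε} ⊆ t n := fun n => (hc n (x n) (t n)).1 (ht n)
    choose ε hεpos hεsub using hball
    rcases hIfin.toFinset.eq_empty_or_nonempty with hF | hF
    · refine ⟨1, one_pos, fun y _ => hsub ?_⟩
      intro n hn
      exfalso
      have : n ∈ hIfin.toFinset := hIfin.mem_toFinset.2 hn
      simp [hF] at this
    · set F := hIfin.toFinset with hFdef
      set δ : ℝ := F.inf' hF (fun n => (1/2:ℝ)^n * min (ε n) 1) with hδdef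
      have hδpos : 0 < δ := by
        rw [hδdef, Finset.lt_inf'_iff]
        intro n _
        have := hεpos n
        positivity
      refine ⟨δ, hδpos, fun y hy => hsub ?_⟩
      intro n hnI
      have hnF : n ∈ F := hIfin.mem_toFinset.2 hnI
      have hterm : (1/2:ℝ)^n * min 1 (dd n (x n) (y n)) ≤ rho dd x y :=
        Summable.le_tsum (rho_summable hd x y) n (fun j _ => rho_term_nonneg hd x y j)
      have hδle : δ ≤ (1/2:ℝ)^n * min (ε n) 1 := Finset.inf'_le _ hnF
      have hlt : (1/2:ℝ)^n * min 1 (dd n (x n) (y n)) < (1/2:ℝ)^n * min (ε n) 1 := by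
        calc (1/2:ℝ)^n * min 1 (dd n (x n) (y n)) ≤ rho dd x y := hterm
          _ < δ := hy
          _ ≤ _ := hδle
      have hlt2 : min 1 (dd n (x n) (y n)) < min (ε n) 1 := by
        have hp : (0:ℝ) < (1/2:ℝ)^n := by positivity
        exact lt_of_mul_lt_mul_left hlt hp.le
      have hdlt : dd n (x n) (y n) < ε n := by
        rcases le_or_gt 1 (dd n (x n) (y n)) with h | h
        · exfalso
          rw [min_eq_left h] at hlt2
          have := min_le_right (ε n) 1
          linarith
        · rw [min_eq_right h.le] at hlt2
          exact lt_of_lt_of_le hlt2 (min_le_left _ _)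
      exact hεsub n hdlt
  · -- ∃ ε ball ⊆ s → s ∈ nhds x
    rintro ⟨ε, hεpos, hsub⟩
    apply Filter.mem_of_superset _ hsub
    -- find K with tail < ε/2
    obtain ⟨K, hK⟩ : ∃ K : ℕ, (1/2:ℝ)^K * 2 < ε/2 := by
      have h2 : Tendsto (fun K : ℕ => (1/2:ℝ)^K * 2) atTop (nhds (0*2)) :=
        (tendsto_pow_atTop_nhds_zero_of_lt_one (by norm_num) (by norm_num)).mul_const 2
      rw [zero_mul] at h2
      have := (h2.eventually (eventually_lt_nhds (show (0:ℝ) < ε/2 by linarith))).exists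
      exact this
    set δ : ℝ := ε/(2*(K+1)) with hδdef
    have hδpos : 0 < δ := by positivity
    have hmem : (Set.Iio K).pi (fun n => {y | dd n (x n) y < δ}) ∈ nhds x := by
      apply set_pi_mem_nhds (Set.finite_Iio K)
      intro n _
      exact ball_mem_nhds' (hc n) (x n) hδpos
    apply Filter.mem_of_superset hmem
    intro y hy
    have hbound : rho dd x y < ε := by
      have hsum := rho_summable hd x y
      have hsplit := Summable.sum_add_tsum_nat_add (f := fun n => (1/2:ℝ)^n * min 1 (dd n (x n) (y n))) K hsum
      have hhead : ∑ i ∈ Finset.range K, (1/2:ℝ)^i * min 1 (dd i (x i) (y i)) ≤ K * δ := by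
        calc ∑ i ∈ Finset.range K, (1/2:ℝ)^i * min 1 (dd i (x i) (y i))
            ≤ ∑ i ∈ Finset.range K, δ := by
              apply Finset.sum_le_sum
              intro i hi
              have hiK : i < K := Finset.mem_range.1 hi
              have hdi : dd i (x i) (y i) < δ := hy i hiK
              calc (1/2:ℝ)^i * min 1 (dd i (x i) (y i)) ≤ 1 * min 1 (dd i (x i) (y i)) := by
                    apply mul_le_mul_of_nonneg_right (pow_le_one₀ (by norm_num) (by norm_num))
                      (le_min zero_le_one ((hd i).nonneg' _ _))
                _ = min 1 (dd i (x i) (y i)) := one_mul _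
                _ ≤ dd i (x i) (y i) := min_le_right _ _
                _ ≤ δ := hdi.le
          _ = K * δ := by rw [Finset.sum_const, Finset.card_range, nsmul_eq_mul]
      have htail : ∑' (i : ℕ), (1/2:ℝ)^(i+K) * min 1 (dd (i+K) (x (i+K)) (y (i+K))) ≤ (1/2:ℝ)^K * 2 := by
        have hs1 : Summable (fun i : ℕ => (1/2:ℝ)^(i+K) * min 1 (dd (i+K) (x (i+K)) (y (i+K)))) :=
          (summable_nat_add_iff K).2 hsum
        have hs2 : Summable (fun i : ℕ => (1/2:ℝ)^(i+K)) := by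
          simpa [pow_add] using (summable_geometric_of_lt_one (r := (1/2:ℝ)) (by norm_num) (by norm_num)).mul_right ((1/2:ℝ)^K)
        calc ∑' (i : ℕ), (1/2:ℝ)^(i+K) * min 1 (dd (i+K) (x (i+K)) (y (i+K)))
            ≤ ∑' (i : ℕ), (1/2:ℝ)^(i+K) := by
              apply Summable.tsum_le_tsum _ hs1 hs2
              intro i
              calc (1/2:ℝ)^(i+K) * min 1 (dd (i+K) (x (i+K)) (y (i+K))) ≤ (1/2:ℝ)^(i+K) * 1 := by
                    apply mul_le_mul_of_nonneg_left (min_le_left _ _) (by positivity)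
                _ = _ := mul_one _
          _ = (1/2:ℝ)^K * ∑' (i : ℕ), (1/2:ℝ)^i := by
              rw [← tsum_mul_left]
              exact tsum_congr fun i => by rw [pow_add]; ring
          _ = (1/2:ℝ)^K * 2 := by
              rw [tsum_geometric_of_lt_one (by norm_num) (by norm_num)]
              norm_num
      have hKδ : (K:ℝ) * δ < ε/2 := by
        rw [hδdef]
        have heq : (K:ℝ) * (ε / (2 * (↑K + 1))) = ε * K / (2*((K:ℝ)+1)) := by ring
        rw [heq, div_lt_div_iff₀ (by positivity) (by norm_num)]
        nlinarith
      rw [rho, ← hsplit]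
      linarith
    exact hbound
end rhoCompat

section assemble
variable {G : ℕ → Type*} [∀ n, Group (G n)] [∀ n, TopologicalSpace (G n)]
  {dd : ∀ n, G n → G n → ℝ}

lemma rho_inv (hinv : ∀ n, ∀ h g f : G n, dd n (h * g) (h * f) = dd n g f)
    (h g f : ∀ n, G n) : rho dd (h * g) (h * f) = rho dd g f := by
  unfold rho
  exact tsum_congr fun n => by rw [Pi.mul_apply, Pi.mul_apply, hinv n]

/-- The coordinate-probing compatible left-invariant metric on the product. -/
lemma Dn_clim (hdd : ∀ n, IsCompatibleLeftInvariantMetric (G n) (dd n)) (n₀ : ℕ) :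
    IsCompatibleLeftInvariantMetric (∀ n, G n)
      (fun x y => dd n₀ (x n₀) (y n₀) + rho dd x y) := by
  have hm : ∀ n, IsMetric (dd n) := fun n => (hdd n).1
  have hc : ∀ n, IsCompatible (G n) (dd n) := fun n => (hdd n).2.1
  have hrm := rho_metric (G := G) hm
  refine ⟨⟨fun x y => ?_, fun x y => ?_, fun x y z => ?_⟩, ?_, ?_⟩
  all_goals try dsimp only
  · constructor
    · intro h
      have h1 : rho dd x y = 0 := by
        have := (hm n₀).nonneg' (x n₀) (y n₀)
        have := rho_nonneg hm x y
        linarith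
      exact (hrm.1 x y).1 h1
    · intro h; subst h
      rw [((hm n₀).1 (x n₀) (x n₀)).2 rfl, (hrm.1 x x).2 rfl, add_zero]
  · rw [(hm n₀).2.1, hrm.2.1]
  · have := (hm n₀).2.2 (x n₀) (y n₀) (z n₀)
    have := hrm.2.2 x y z
    linarith
  · intro x s
    constructor
    · intro hs
      obtain ⟨ε, hε, hsub⟩ := ((rho_compat hm hc) x s).1 hs
      refine ⟨ε, hε, fun y hy => hsub ?_⟩
      have := (hm n₀).nonneg' (x n₀) (y n₀)
      simp only [Set.mem_setOf_eq] at hy ⊢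
      linarith
    · rintro ⟨ε, hε, hsub⟩
      have hmem : {y : ∀ n, G n | dd n₀ (x n₀) (y n₀) < ε/2} ∩ {y | rho dd x y < ε/2} ∈ nhds x := by
        apply Filter.inter_mem
        · have hb : {z : G n₀ | dd n₀ (x n₀) z < ε/2} ∈ nhds (x n₀) :=
            ball_mem_nhds' (hc n₀) (x n₀) (by linarith)
          exact (continuous_apply n₀).continuousAt.preimage_mem_nhds hb
        · exact ball_mem_nhds' (rho_compat hm hc) x (by linarith)
      apply Filter.mem_of_superset hmem
      rintro y ⟨h1, h2⟩
      apply hsub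
      simp only [Set.mem_setOf_eq] at h1 h2 ⊢
      linarith
  · intro h g f
    rw [Pi.mul_apply, Pi.mul_apply, (hdd n₀).2.2, rho_inv (fun n => (hdd n).2.2) h g f]
end assemble


theorem exists_seq_leaving_relOB_sets_but_not_tendsToInfinity
    {G : ℕ → Type*} [∀ n, Group (G n)] [∀ n, TopologicalSpace (G n)]
    [∀ n, IsTopologicalGroup (G n)] [∀ n, TopologicalSpace.MetrizableSpace (G n)]
    (hfail : ∀ n, ∃ g : ℕ → G n, TendsToInfinity (G n) g) :
    ∃ h : ℕ → ∀ n, G n,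
      (∀ A : Set (∀ n, G n), HasRelPropOB (∀ n, G n) A → ∃ N, ∀ m ≥ N, h m ∉ A) ∧
      ¬ TendsToInfinity (∀ n, G n) h := by
  classical
  choose gg hgg using hfail
  choose dd hdd htend using hgg
  have hm : ∀ n, IsMetric (dd n) := fun n => (hdd n).1
  have ha : ∀ n (t : ℕ), ∃ x : G n, (t:ℝ) ≤ dd n x 1 := by
    intro n t
    obtain ⟨k, hk⟩ := (Filter.tendsto_atTop.mp (htend n) t).exists
    exact ⟨gg n k, hk⟩
  choose a hA using ha
  set Nf : ℕ → ℕ := fun m => (Nat.unpair m).1 with hNfdef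
  set hseq : ℕ → ∀ n, G n := fun m n => if n ≤ Nf m then a n (Nf m) else a n m with hseqdef
  refine ⟨hseq, ?_, ?_⟩
  · -- eventually leaves every relatively (OB) set
    intro A hOB
    by_contra hcon
    push_neg at hcon
    obtain ⟨m₀, -, hm₀⟩ := hcon 0
    choose B hB using fun n₀ => hOB _ (Dn_clim hdd n₀)
    set C : ℕ → ℝ := fun n => B n + dd n (hseq m₀ n) 1 with hCdef
    have key : ∀ m, hseq m ∈ A → ∀ n, dd n (hseq m n) 1 ≤ C n := by
      intro m hmA n
      have h1 : dd n (hseq m n) (hseq m₀ n) + rho dd (hseq m) (hseq m₀) ≤ B n :=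
        hB n _ hmA _ hm₀
      have h2 : 0 ≤ rho dd (hseq m) (hseq m₀) := rho_nonneg hm _ _
      have h3 : dd n (hseq m n) 1 ≤ dd n (hseq m n) (hseq m₀ n) + dd n (hseq m₀ n) 1 :=
        (hm n).2.2 _ _ _
      simp only [hCdef]
      linarith
    have keyN : ∀ m, hseq m ∈ A → (Nf m : ℝ) ≤ C 0 := by
      intro m hmA
      have h0 : hseq m 0 = a 0 (Nf m) := by simp [hseqdef]
      have := key m hmA 0
      rw [h0] at this
      exact le_trans (hA 0 (Nf m)) this
    have keym : ∀ m, hseq m ∈ A → (m : ℝ) ≤ C (Nf m + 1) := by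
      intro m hmA
      have h0 : hseq m (Nf m + 1) = a (Nf m + 1) m := by
        simp [hseqdef]
      have := key m hmA (Nf m + 1)
      rw [h0] at this
      exact le_trans (hA (Nf m + 1) m) this
    set T : ℕ := ⌊C 0⌋₊ with hTdef
    have hrangene : (Finset.range (T+2)).Nonempty := ⟨0, by simp⟩
    set Cmax : ℝ := (Finset.range (T+2)).sup' hrangene C with hCmax
    obtain ⟨m, hmge, hmA⟩ := hcon (⌊Cmax⌋₊ + 1)
    have hNfle : Nf m ≤ T := Nat.le_floor (keyN m hmA)
    have hmle : (m:ℝ) ≤ Cmax := by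
      refine le_trans (keym m hmA) (Finset.le_sup' C ?_)
      simp only [Finset.mem_range]
      omega
    have : m ≤ ⌊Cmax⌋₊ := Nat.le_floor hmle
    omega
  · -- does not tend to infinity
    rintro ⟨D, ⟨hDm, hDc, hDi⟩, hDt⟩
    have hball : {y : ∀ n, G n | D 1 y < 1} ∈ nhds (1 : ∀ n, G n) :=
      ball_mem_nhds' hDc 1 one_pos
    rw [nhds_pi, Filter.mem_pi] at hball
    obtain ⟨I, hIfin, t, ht, hsub⟩ := hball
    obtain ⟨N₀, hN₀⟩ : ∃ N₀, ∀ n ∈ I, n ≤ N₀ := by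
      rcases hIfin.bddAbove with ⟨b, hb⟩
      exact ⟨b, fun n hn => hb hn⟩
    set c : ∀ n, G n := fun n => if n ≤ N₀ then a n N₀ else 1 with hcdef
    have hkey : ∀ j : ℕ, D (hseq (Nat.pair N₀ j)) 1 < 1 + D c 1 := by
      intro j
      set m := Nat.pair N₀ j with hmdef
      have hNfm : Nf m = N₀ := by simp [hNfdef, hmdef, Nat.unpair_pair]
      have hcoord : ∀ n, n ≤ N₀ → hseq m n = c n := by
        intro n hn
        simp [hseqdef, hcdef, hNfm, hn]
      have hmem : (c⁻¹ * hseq m) ∈ I.pi t := by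
        intro n hn
        have h1 : (c⁻¹ * hseq m) n = 1 := by
          rw [Pi.mul_apply, Pi.inv_apply, hcoord n (hN₀ n hn), inv_mul_cancel]
        rw [h1]
        exact mem_of_mem_nhds (ht n)
      have hlt : D 1 (c⁻¹ * hseq m) < 1 := hsub hmem
      have heq : D c (hseq m) = D 1 (c⁻¹ * hseq m) := by
        have := hDi c 1 (c⁻¹ * hseq m)
        rwa [mul_one, mul_inv_cancel_left] at this
      have htri : D (hseq m) 1 ≤ D (hseq m) c + D c 1 := hDm.2.2 _ _ _
      have hsym : D (hseq m) c = D c (hseq m) := hDm.2.1 _ _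
      linarith
    obtain ⟨M, hM⟩ := Filter.eventually_atTop.mp (Filter.tendsto_atTop.mp hDt (1 + D c 1))
    have h1 := hM (Nat.pair N₀ M) (Nat.right_le_pair N₀ M)
    have h2 := hkey M
    linarith
end
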